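/- arXiv:1504.02689 — 2 statements merged into one kernel-verified Lean document; each statement's English description precedes it below -/
import Mathlib

section
/- The function π^R(a) = [∑_{j=0}^{n-1} (Q(j|a,m,n)/(a+j)² − m/(ma+j)²)]^{1/2}, where Q(j|a,m,n) is the upper tail of the Beta-Binomial pmf p(x|a,m,n), satisfies π^R(a) = √((m−1)c_n/m)·a^{-1/2} + O(√a) as a → 0⁺ (with c_n = ∑_{k=1}^{n-1} 1/k), and in particular is integrable near 0. -/
open Asymptotics Filter MeasureTheory

/-- The Beta-Binomial pmf `p(x | a, m, n)`. -/
noncomputable def bbinom (m n : ℕ) (a : ℝ) (x : ℕ) : ℝ :=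
  (n.choose x : ℝ) * Real.Gamma ((x : ℝ) + a) *
    Real.Gamma ((n : ℝ) - (x : ℝ) + ((m : ℝ) - 1) * a) * Real.Gamma ((m : ℝ) * a) /
    (Real.Gamma a * Real.Gamma (((m : ℝ) - 1) * a) * Real.Gamma ((n : ℝ) + (m : ℝ) * a))

/-- The upper tail `Q(j | a, m, n) = ∑_{l=j+1}^n p(l | a, m, n)`. -/
noncomputable def Qtail (m n : ℕ) (a : ℝ) (j : ℕ) : ℝ :=
  ∑ l ∈ Finset.Icc (j + 1) n, bbinom m n a l

/-- The reference prior `π^R(a | m, n)`. -/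
noncomputable def piR (m n : ℕ) (a : ℝ) : ℝ :=
  Real.sqrt (∑ j ∈ Finset.range n,
    (Qtail m n a j / (a + (j : ℝ)) ^ 2 - (m : ℝ) / ((m : ℝ) * a + (j : ℝ)) ^ 2))

section aux

set_option linter.unusedVariables false

noncomputable def auxD (m n : ℕ) (a : ℝ) : ℝ := ∏ k ∈ Finset.Ico 1 n, ((m:ℝ)*a + k)
noncomputable def auxU (m n : ℕ) (a : ℝ) (l : ℕ) : ℝ :=
  (n.choose l : ℝ) * (∏ k ∈ Finset.Ico 1 l, (a + (k:ℝ))) *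
    (∏ k ∈ Finset.Ico 1 (n - l), (((m:ℝ)-1)*a + k)) / auxD m n a
noncomputable def auxT (m n : ℕ) (a : ℝ) : ℝ :=
  ∑ j ∈ Finset.Ico 1 n, (∏ k ∈ Finset.Ico 1 j, (a + (k:ℝ))) * ∏ k ∈ Finset.Ico (j+1) n, ((m:ℝ)*a + k)
noncomputable def auxG (m n : ℕ) (a : ℝ) : ℝ :=
  (((m:ℝ)-1)/m) * ((∑ l ∈ Finset.Ico 1 n, auxU m n a l) - auxT m n a / auxD m n a)
noncomputable def auxQ (m n : ℕ) (a : ℝ) (j : ℕ) : ℝ :=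
  (((m:ℝ)-1)/m) * a * (∑ l ∈ Finset.Ico (j+1) n, auxU m n a l) + (1/m) * auxU m n a n
noncomputable def auxS (m n : ℕ) (a : ℝ) : ℝ :=
  ∑ j ∈ Finset.Ico 1 n, (auxQ m n a j / (a + (j:ℝ))^2 - (m:ℝ) / ((m:ℝ)*a + j)^2)
noncomputable def auxH (m n : ℕ) (a : ℝ) : ℝ := auxG m n a + a * auxS m n a

lemma Gamma_nat_add {a : ℝ} (ha : 0 < a) (l : ℕ) :
    Real.Gamma ((l : ℝ) + a) = (∏ k ∈ Finset.range l, (a + (k:ℝ))) * Real.Gamma a := by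
  induction l with
  | zero => simp
  | succ l ih =>
    have h1 : ((l+1 : ℕ) : ℝ) + a = ((l : ℝ) + a) + 1 := by push_cast; ring
    have h2 : (l : ℝ) + a ≠ 0 := by positivity
    rw [h1, Real.Gamma_add_one h2, ih, Finset.prod_range_succ]
    ring

lemma auxD_pos {m n : ℕ} {a : ℝ} (ha : 0 ≤ a) : 0 < auxD m n a := by
  apply Finset.prod_pos
  intro k hk
  have h1 : 1 ≤ k := (Finset.mem_Ico.1 hk).1
  have : (1:ℝ) ≤ (k:ℝ) := by exact_mod_cast h1
  nlinarith [mul_nonneg (Nat.cast_nonneg (α := ℝ) m) ha]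

lemma prodIco_pos {a : ℝ} (c : ℝ) (hc : 0 ≤ c) (s t : ℕ) (hs : 1 ≤ s) :
    0 < ∏ k ∈ Finset.Ico s t, (c + (k:ℝ)) := by
  apply Finset.prod_pos
  intro k hk
  have h1 : s ≤ k := (Finset.mem_Ico.1 hk).1
  have : (1:ℝ) ≤ (k:ℝ) := by exact_mod_cast hs.trans h1
  linarith

lemma bbinom_eq {m n l : ℕ} {a : ℝ} (hm : 2 ≤ m) (ha : 0 < a) (hl : l ≤ n) :
    bbinom m n a l = (n.choose l : ℝ) * (∏ k ∈ Finset.range l, (a + (k:ℝ))) *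
      (∏ k ∈ Finset.range (n - l), (((m:ℝ)-1)*a + k)) /
      ∏ k ∈ Finset.range n, ((m:ℝ)*a + k) := by
  have hm1 : (0:ℝ) < (m:ℝ) - 1 := by
    have : (2:ℝ) ≤ m := by exact_mod_cast hm
    linarith
  have hma : (0:ℝ) < (m:ℝ) * a := by positivity
  have hm1a : (0:ℝ) < ((m:ℝ) - 1) * a := by positivity
  have e1 : Real.Gamma ((l : ℝ) + a) = (∏ k ∈ Finset.range l, (a + (k:ℝ))) * Real.Gamma a :=
    Gamma_nat_add ha l
  have e2 : Real.Gamma ((n : ℝ) - (l : ℝ) + ((m:ℝ)-1) * a)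
      = (∏ k ∈ Finset.range (n - l), (((m:ℝ)-1)*a + (k:ℝ))) * Real.Gamma (((m:ℝ)-1)*a) := by
    have : (n : ℝ) - (l : ℝ) = ((n - l : ℕ) : ℝ) := by
      rw [Nat.cast_sub hl]
    rw [this]
    exact Gamma_nat_add hm1a (n - l)
  have e3 : Real.Gamma ((n : ℝ) + (m:ℝ) * a)
      = (∏ k ∈ Finset.range n, ((m:ℝ)*a + (k:ℝ))) * Real.Gamma ((m:ℝ)*a) :=
    Gamma_nat_add hma n
  have hGa := Real.Gamma_pos_of_pos ha
  have hGb := Real.Gamma_pos_of_pos hm1a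
  have hGc := Real.Gamma_pos_of_pos hma
  have hP3 : (0:ℝ) < ∏ k ∈ Finset.range n, ((m:ℝ)*a + (k:ℝ)) := by
    apply Finset.prod_pos; intro k _; positivity
  rw [bbinom, e1, e2, e3]
  field_simp

lemma prod_sub_prod (x y : ℕ → ℝ) (s : ℕ) : ∀ t, s ≤ t →
    (∏ k ∈ Finset.Ico s t, x k) - (∏ k ∈ Finset.Ico s t, y k)
      = ∑ j ∈ Finset.Ico s t, (∏ k ∈ Finset.Ico s j, x k) * (x j - y j) *
          ∏ k ∈ Finset.Ico (j+1) t, y k := by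
  intro t
  induction t with
  | zero => intro h; interval_cases s <;> simp
  | succ t ih =>
    intro hst
    rcases Nat.lt_or_ge s (t+1) with h | h
    · have hst' : s ≤ t := by omega
      rw [Finset.prod_Ico_succ_top hst', Finset.prod_Ico_succ_top hst',
        Finset.sum_Ico_succ_top hst']
      have htail : ∀ j ∈ Finset.Ico s t,
          (∏ k ∈ Finset.Ico s j, x k) * (x j - y j) * ∏ k ∈ Finset.Ico (j+1) (t+1), y k
            = ((∏ k ∈ Finset.Ico s j, x k) * (x j - y j) * ∏ k ∈ Finset.Ico (j+1) t, y k) * y t := by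
        intro j hj
        have hj' : j + 1 ≤ t := (Finset.mem_Ico.1 hj).2
        rw [Finset.prod_Ico_succ_top hj']
        ring
      rw [Finset.sum_congr rfl htail, ← Finset.sum_mul, ← ih hst']
      have : Finset.Ico (t+1) (t+1) = ∅ := by simp
      rw [this]
      simp
      ring
    · have : s = t + 1 := by omega
      subst this
      simp

lemma range_prod_bot {c : ℝ} {l : ℕ} (hl : 0 < l) :
    (∏ k ∈ Finset.range l, (c + (k:ℝ))) = c * ∏ k ∈ Finset.Ico 1 l, (c + (k:ℝ)) := by
  rw [Finset.range_eq_Ico, Finset.prod_eq_prod_Ico_succ_bot hl]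
  norm_num

lemma prodD_split {m n : ℕ} {a : ℝ} (hn : 0 < n) :
    (∏ k ∈ Finset.range n, ((m:ℝ)*a + (k:ℝ))) = (m:ℝ)*a * auxD m n a := by
  rw [Finset.range_eq_Ico, Finset.prod_eq_prod_Ico_succ_bot hn, auxD]
  norm_num

lemma bbinom_mid {m n l : ℕ} {a : ℝ} (hm : 2 ≤ m) (ha : 0 < a) (hl0 : 0 < l) (hln : l < n) :
    bbinom m n a l = (((m:ℝ)-1)/m) * a * auxU m n a l := by
  have hD := auxD_pos (m := m) (n := n) ha.le
  have hm0 : ((m:ℝ)) ≠ 0 := by positivity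
  rw [bbinom_eq hm ha hln.le, range_prod_bot hl0, range_prod_bot (c := ((m:ℝ)-1)*a) (by omega),
    prodD_split (by omega), auxU]
  field_simp

lemma bbinom_top {m n : ℕ} {a : ℝ} (hm : 2 ≤ m) (ha : 0 < a) (hn : 0 < n) :
    bbinom m n a n = (1/(m:ℝ)) * auxU m n a n := by
  have hD := auxD_pos (m := m) (n := n) ha.le
  have hm0 : ((m:ℝ)) ≠ 0 := by positivity
  rw [bbinom_eq hm ha le_rfl, range_prod_bot hn, prodD_split hn, auxU]
  simp only [Nat.sub_self, Finset.Ico_self, Finset.Ico_eq_empty_of_le (Nat.zero_le 1), Finset.prod_empty]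
  field_simp
  ring

lemma Qtail_eq {m n j : ℕ} {a : ℝ} (hm : 2 ≤ m) (ha : 0 < a) (hjn : j < n) :
    Qtail m n a j = auxQ m n a j := by
  rw [Qtail, ← Finset.Ico_add_one_right_eq_Icc, Finset.sum_Ico_succ_top hjn,
    Finset.sum_congr rfl (fun l hl => by
      obtain ⟨h1, h2⟩ := Finset.mem_Ico.1 hl
      exact bbinom_mid hm ha (by omega) h2),
    bbinom_top hm ha (by omega), auxQ, ← Finset.mul_sum]

lemma auxU_top_sub_one {m n : ℕ} {a : ℝ} (hn : 1 ≤ n) (hD : auxD m n a ≠ 0) :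
    auxU m n a n - 1 = -(((m:ℝ)-1) * a) * auxT m n a / auxD m n a := by
  have key : (∏ k ∈ Finset.Ico 1 n, (a + (k:ℝ))) - auxD m n a
      = -(((m:ℝ)-1) * a) * auxT m n a := by
    rw [auxD, prod_sub_prod (fun k => a + (k:ℝ)) (fun k => (m:ℝ)*a + k) 1 n hn, auxT,
      Finset.mul_sum]
    refine Finset.sum_congr rfl fun j _ => ?_
    ring
  rw [auxU]
  simp only [Nat.sub_self, Finset.Ico_self, Finset.Ico_eq_empty_of_le (Nat.zero_le 1), Finset.prod_empty, Nat.choose_self, Nat.cast_one]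
  field_simp
  linarith [key]

lemma sum_eq_H_div {m n : ℕ} {a : ℝ} (hm : 2 ≤ m) (hn : 2 ≤ n) (ha : 0 < a) :
    (∑ j ∈ Finset.range n,
      (Qtail m n a j / (a + (j : ℝ)) ^ 2 - (m : ℝ) / ((m : ℝ) * a + (j : ℝ)) ^ 2))
      = auxH m n a / a := by
  have hD := (auxD_pos (m := m) (n := n) ha.le).ne'
  have hm0 : ((m:ℝ)) ≠ 0 := by positivity
  have h0n : (0:ℕ) < n := by omega
  rw [Finset.range_eq_Ico, Finset.sum_eq_sum_Ico_succ_bot h0n]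
  have hrest : ∀ j ∈ Finset.Ico 1 n,
      (Qtail m n a j / (a + (j : ℝ)) ^ 2 - (m : ℝ) / ((m : ℝ) * a + (j : ℝ)) ^ 2)
      = (auxQ m n a j / (a + (j : ℝ)) ^ 2 - (m : ℝ) / ((m : ℝ) * a + (j : ℝ)) ^ 2) := by
    intro j hj
    rw [Qtail_eq hm ha (Finset.mem_Ico.1 hj).2]
  rw [Finset.sum_congr rfl hrest]
  have hterm0 : Qtail m n a 0 / (a + ((0:ℕ) : ℝ)) ^ 2 - (m : ℝ) / ((m : ℝ) * a + ((0:ℕ) : ℝ)) ^ 2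
      = auxG m n a / a := by
    rw [Qtail_eq hm ha h0n, auxQ, auxG]
    have hu := auxU_top_sub_one (m := m) (a := a) (Nat.one_le_of_lt hn) (auxD_pos ha.le).ne'
    have hu' : auxU m n a n = 1 - ((m:ℝ)-1) * a * auxT m n a / auxD m n a := by
      field_simp at hu ⊢
      linarith
    rw [hu']
    simp only [Nat.cast_zero, add_zero, zero_add]
    field_simp
    ring
  rw [hterm0, ← auxS, auxH]
  field_simp

lemma diff_prod1 (s t : ℕ) : Differentiable ℝ (fun a : ℝ => ∏ k ∈ Finset.Ico s t, (a + (k:ℝ))) :=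
  Differentiable.fun_finsetProd fun _ _ => by fun_prop

lemma diff_prod2 (c : ℝ) (s t : ℕ) :
    Differentiable ℝ (fun a : ℝ => ∏ k ∈ Finset.Ico s t, (c * a + (k:ℝ))) :=
  Differentiable.fun_finsetProd fun _ _ => by fun_prop

lemma auxH_diff {m n : ℕ} {x : ℝ} (hx : 0 ≤ x) : DifferentiableAt ℝ (auxH m n) x := by
  have hD : auxD m n x ≠ 0 := (auxD_pos hx).ne'
  have hDdiff : DifferentiableAt ℝ (auxD m n) x := (diff_prod2 (m:ℝ) 1 n).differentiableAt
  have hU : ∀ l, DifferentiableAt ℝ (fun a => auxU m n a l) x := fun l =>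
    DifferentiableAt.div (by
      exact (((differentiableAt_const _).mul (diff_prod1 1 l).differentiableAt).mul
        (diff_prod2 ((m:ℝ)-1) 1 (n-l)).differentiableAt)) hDdiff hD
  have hT : DifferentiableAt ℝ (auxT m n) x :=
    DifferentiableAt.fun_sum fun j _ =>
      ((diff_prod1 1 j).differentiableAt).mul (diff_prod2 (m:ℝ) (j+1) n).differentiableAt
  have hG : DifferentiableAt ℝ (auxG m n) x :=
    (differentiableAt_const _).mul ((DifferentiableAt.fun_sum fun l _ => hU l).sub (hT.div hDdiff hD))
  have hQ : ∀ j, DifferentiableAt ℝ (fun a => auxQ m n a j) x := fun j =>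
    (((differentiableAt_const _).mul differentiableAt_fun_id).mul
      (DifferentiableAt.fun_sum fun l _ => hU l)).add ((differentiableAt_const _).mul (hU n))
  have hS : DifferentiableAt ℝ (auxS m n) x := by
    apply DifferentiableAt.fun_sum
    intro j hj
    have hj1 : 1 ≤ j := (Finset.mem_Ico.1 hj).1
    have hj1' : (1:ℝ) ≤ (j:ℝ) := by exact_mod_cast hj1
    have h1 : (x + (j:ℝ))^2 ≠ 0 := by positivity
    have h2 : ((m:ℝ)*x + (j:ℝ))^2 ≠ 0 := by
      have : 0 ≤ (m:ℝ)*x := by positivity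
      positivity
    exact ((hQ j).div (by fun_prop) h1).sub ((differentiableAt_const _).div (by fun_prop) h2)
  exact hG.add (differentiableAt_fun_id.mul hS)

-- all three base products at `a = 0` are `∏ k`
lemma prod0 (c : ℝ) (s t : ℕ) :
    (∏ k ∈ Finset.Ico s t, (c * (0:ℝ) + (k:ℝ))) = ∏ k ∈ Finset.Ico s t, (k:ℝ) := by
  simp

lemma prod0' (s t : ℕ) :
    (∏ k ∈ Finset.Ico s t, ((0:ℝ) + (k:ℝ))) = ∏ k ∈ Finset.Ico s t, (k:ℝ) := by
  simp

lemma prodIco_cast_fact (j : ℕ) :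
    (∏ k ∈ Finset.Ico 1 j, (k:ℝ)) = (Nat.factorial (j - 1) : ℝ) := by
  cases j with
  | zero => simp
  | succ i =>
    have : (∏ k ∈ Finset.Ico 1 (i+1), k) = Nat.factorial i := Finset.prod_Ico_id_eq_factorial i
    rw [show i + 1 - 1 = i from rfl, ← this]
    push_cast
    rfl

lemma prodIco_nat_pos (s t : ℕ) (hs : 1 ≤ s) : (0:ℝ) < ∏ k ∈ Finset.Ico s t, (k:ℝ) := by
  apply Finset.prod_pos
  intro k hk
  have := (Finset.mem_Ico.1 hk).1
  have : (1:ℝ) ≤ (k:ℝ) := by exact_mod_cast hs.trans this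
  linarith

lemma auxT_div_D_at_zero {m n : ℕ} (hn : 1 ≤ n) :
    auxT m n 0 / auxD m n 0 = ∑ k ∈ Finset.Ico 1 n, (1:ℝ)/k := by
  have hD : auxD m n 0 = ∏ k ∈ Finset.Ico 1 n, (k:ℝ) := prod0 _ 1 n
  have hDpos : (0:ℝ) < auxD m n 0 := auxD_pos le_rfl
  have hterm : ∀ j ∈ Finset.Ico 1 n,
      (∏ k ∈ Finset.Ico 1 j, ((0:ℝ) + (k:ℝ))) * ∏ k ∈ Finset.Ico (j+1) n, ((m:ℝ)*0 + k)
        = auxD m n 0 * (1/(j:ℝ)) := by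
    intro j hj
    obtain ⟨hj1, hjn⟩ := Finset.mem_Ico.1 hj
    rw [prod0', prod0, hD]
    have hsplit : (∏ k ∈ Finset.Ico 1 n, (k:ℝ))
        = (∏ k ∈ Finset.Ico 1 j, (k:ℝ)) * ((j:ℝ) * ∏ k ∈ Finset.Ico (j+1) n, (k:ℝ)) := by
      rw [← Finset.prod_Ico_consecutive (fun k => (k:ℝ)) hj1 hjn.le,
        Finset.prod_eq_prod_Ico_succ_bot hjn]
    rw [hsplit]
    have hj0 : (j:ℝ) ≠ 0 := by positivity
    field_simp
  rw [auxT, Finset.sum_congr rfl hterm, ← Finset.mul_sum]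
  field_simp

lemma auxU_at_zero {m n l : ℕ} (hl1 : 1 ≤ l) (hln : l < n) :
    auxU m n 0 l = 1/(l:ℝ) + 1/((n - l : ℕ) : ℝ) := by
  obtain ⟨i, rfl⟩ : ∃ i, l = i + 1 := ⟨l - 1, by omega⟩
  obtain ⟨d, hd⟩ : ∃ d, n - (i+1) = d + 1 := ⟨n - (i+1) - 1, by omega⟩
  have hn : n = i + d + 2 := by omega
  rw [auxU, prod0', prod0, hd]
  have hD : auxD m n 0 = (Nat.factorial (n-1) : ℝ) := by
    rw [auxD, prod0, prodIco_cast_fact]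
  rw [hD, prodIco_cast_fact, prodIco_cast_fact]
  have hch : ((n.choose (i+1)) : ℝ) * Nat.factorial (i+1) * Nat.factorial (d+1) = Nat.factorial n := by
    have := Nat.choose_mul_factorial_mul_factorial (le_of_lt hln)
    rw [show n - (i+1) = d + 1 from hd] at this
    exact_mod_cast congrArg (Nat.cast : ℕ → ℝ) this
  have hfact1 : (Nat.factorial (i+1) : ℝ) = (i+1) * Nat.factorial i := by exact_mod_cast Nat.factorial_succ i
  have hfact2 : (Nat.factorial (d+1) : ℝ) = (d+1) * Nat.factorial d := by exact_mod_cast Nat.factorial_succ d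
  have hfact3 : (Nat.factorial n : ℝ) = n * Nat.factorial (n-1) := by
    rw [hn]
    have : Nat.factorial (i + d + 2) = (i+d+2) * Nat.factorial (i+d+1) := Nat.factorial_succ (i+d+1)
    rw [show i+d+2-1 = i+d+1 from rfl]
    exact_mod_cast this
  have h1 : (Nat.factorial (i+1-1):ℝ) = (Nat.factorial i : ℝ) := by norm_num
  have h2 : (Nat.factorial (d+1-1):ℝ) = (Nat.factorial d : ℝ) := by norm_num
  rw [h1, h2]
  have hi : (0:ℝ) < (i:ℝ)+1 := by positivity
  have hd' : (0:ℝ) < (d:ℝ)+1 := by positivity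
  have hfp : (0:ℝ) < (Nat.factorial (n-1) : ℝ) := by exact_mod_cast Nat.factorial_pos (n-1)
  have hip : (0:ℝ) < (Nat.factorial i : ℝ) := by exact_mod_cast Nat.factorial_pos i
  have hdp : (0:ℝ) < (Nat.factorial d : ℝ) := by exact_mod_cast Nat.factorial_pos d
  have hnr : ((n:ℕ):ℝ) = (i:ℝ) + (d:ℝ) + 2 := by rw [hn]; push_cast; ring
  -- target: choose * i! * d! / (n-1)! = 1/(i+1) + 1/(d+1)
  have hch' : ((n.choose (i+1)) : ℝ) = Nat.factorial n / (Nat.factorial (i+1) * Nat.factorial (d+1)) := by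
    field_simp at hch ⊢
    linarith [hch]
  rw [hch', hfact1, hfact2, hfact3, hnr]
  push_cast
  field_simp
  ring

lemma reflect_sum {n : ℕ} (hn : 1 ≤ n) :
    (∑ l ∈ Finset.Ico 1 n, (1:ℝ)/((n - l : ℕ) : ℝ)) = ∑ l ∈ Finset.Ico 1 n, (1:ℝ)/(l:ℝ) := by
  refine Finset.sum_nbij' (fun l => n - l) (fun l => n - l) ?_ ?_ ?_ ?_ ?_
  all_goals intro a ha; simp only [Finset.mem_Ico] at ha ⊢ <;> omega

lemma auxH_zero {m n : ℕ} (hn : 2 ≤ n) :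
    auxH m n 0 = (((m:ℝ)-1)/m) * ∑ k ∈ Finset.Ico 1 n, (1:ℝ)/k := by
  rw [auxH, zero_mul, add_zero, auxG,
    Finset.sum_congr rfl (fun l hl => by
      obtain ⟨h1, h2⟩ := Finset.mem_Ico.1 hl
      exact auxU_at_zero h1 h2),
    Finset.sum_add_distrib, reflect_sum (by omega), auxT_div_D_at_zero (by omega)]
  ring

lemma piR_eq {m n : ℕ} {a : ℝ} (hm : 2 ≤ m) (hn : 2 ≤ n) (ha : 0 < a) :
    piR m n a = Real.sqrt (auxH m n a / a) := by
  rw [piR, sum_eq_H_div hm hn ha]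

end aux

/-- As `a → 0⁺`, `π^R(a) = √((m-1)cₙ/m) a^{-1/2} + O(√a)` with
`cₙ = ∑_{k=1}^{n-1} 1/k`; in particular `π^R` is integrable near `0`. -/
theorem stmt11 (m n : ℕ) (hm : 2 ≤ m) (hn : 2 ≤ n) :
    ((fun a : ℝ =>
        piR m n a -
          Real.sqrt (((m : ℝ) - 1) * (∑ k ∈ Finset.Icc 1 (n - 1), (1 : ℝ) / k) / m) /
            Real.sqrt a)
      =O[nhdsWithin 0 (Set.Ioi 0)] fun a : ℝ => Real.sqrt a)
    ∧ IntegrableOn (piR m n) (Set.Ioo 0 1) := by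
  have hm' : (2:ℝ) ≤ (m:ℝ) := by exact_mod_cast hm
  set c : ℝ := ∑ k ∈ Finset.Icc 1 (n-1), (1:ℝ)/k with hc_def
  set K : ℝ := ((m:ℝ) - 1) * c / m with hK_def
  have hIcc : Finset.Icc 1 (n-1) = Finset.Ico 1 n := by
    rw [← Finset.Ico_add_one_right_eq_Icc]; congr 1; omega
  have hH0 : auxH m n 0 = K := by
    rw [auxH_zero hn, hK_def, hc_def, hIcc]; ring
  have hc1 : (1:ℝ) ≤ c := by
    rw [hc_def]
    calc (1:ℝ) = 1/((1:ℕ):ℝ) := by norm_num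
    _ ≤ _ := Finset.single_le_sum (f := fun k : ℕ => 1/(k:ℝ))
        (fun k _ => by positivity) (by simp [Finset.mem_Icc]; omega)
  have hK : 0 < K := by
    rw [hK_def]
    apply div_pos (mul_pos (by linarith) (by linarith)) (by linarith)
  have hsK : 0 < Real.sqrt K := Real.sqrt_pos.2 hK
  -- big-O bound on auxH near 0
  have hBigO : (fun a : ℝ => auxH m n a - K) =O[nhds 0] (fun a : ℝ => a) := by
    have := (auxH_diff (m := m) (n := n) (x := 0) le_rfl).isBigO_sub
    simpa [hH0] using this
  obtain ⟨C, hCpos, hCbound⟩ := hBigO.exists_pos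
  rw [isBigOWith_iff] at hCbound
  have hev1 : ∀ᶠ a in nhdsWithin 0 (Set.Ioi 0), |auxH m n a - K| ≤ C * a := by
    filter_upwards [hCbound.filter_mono nhdsWithin_le_nhds, self_mem_nhdsWithin] with a h1 h2
    rw [Set.mem_Ioi] at h2
    simpa [abs_of_pos h2] using h1
  have hev2 : ∀ᶠ a in nhdsWithin 0 (Set.Ioi 0), K/2 ≤ auxH m n a := by
    have hcont : ContinuousAt (auxH m n) 0 := (auxH_diff le_rfl).continuousAt
    have : Tendsto (auxH m n) (nhdsWithin 0 (Set.Ioi 0)) (nhds K) := by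
      rw [← hH0]; exact hcont.continuousWithinAt.tendsto
    filter_upwards [this.eventually_const_lt (by linarith : K/2 < K)] with a h
    linarith
  have hev3 : ∀ᶠ a in nhdsWithin 0 (Set.Ioi 0), a ∈ Set.Ioo (0:ℝ) 1 :=
    Ioo_mem_nhdsGT_of_mem (by norm_num : (0:ℝ) ∈ Set.Ico (0:ℝ) 1)
  -- pointwise bound
  have key : ∀ a : ℝ, a ∈ Set.Ioo (0:ℝ) 1 → |auxH m n a - K| ≤ C * a → K/2 ≤ auxH m n a →
      |piR m n a - Real.sqrt K / Real.sqrt a| ≤ (C / Real.sqrt K) * Real.sqrt a := by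
    intro a ha hb hK2
    obtain ⟨ha0, ha1⟩ := ha
    have hHpos : 0 ≤ auxH m n a := by linarith
    have hsa : 0 < Real.sqrt a := Real.sqrt_pos.2 ha0
    rw [piR_eq hm hn ha0, Real.sqrt_div hHpos]
    have hsum : 0 < Real.sqrt (auxH m n a) + Real.sqrt K := by positivity
    have hdiffsq : Real.sqrt (auxH m n a) - Real.sqrt K
        = (auxH m n a - K) / (Real.sqrt (auxH m n a) + Real.sqrt K) := by
      rw [eq_div_iff hsum.ne']
      have e1 := Real.sq_sqrt hHpos
      have e2 := Real.sq_sqrt hK.le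
      nlinarith
    have hnum : |Real.sqrt (auxH m n a) - Real.sqrt K| ≤ (C * a) / Real.sqrt K := by
      rw [hdiffsq, abs_div, abs_of_pos hsum]
      exact div_le_div₀ (mul_pos hCpos ha0).le hb hsK
        (le_add_of_nonneg_left (Real.sqrt_nonneg _))
    have hrw : Real.sqrt (auxH m n a) / Real.sqrt a - Real.sqrt K / Real.sqrt a
        = (Real.sqrt (auxH m n a) - Real.sqrt K) / Real.sqrt a := (sub_div _ _ _).symm
    rw [hrw, abs_div, abs_of_pos hsa]
    rw [div_le_iff₀ hsa]
    calc |Real.sqrt (auxH m n a) - Real.sqrt K| ≤ (C * a) / Real.sqrt K := hnum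
    _ = (C / Real.sqrt K) * Real.sqrt a * Real.sqrt a := by
        rw [mul_assoc (C / Real.sqrt K), Real.mul_self_sqrt ha0.le]; ring
  -- Part 1 : the big-O statement
  have part1 : (fun a : ℝ =>
      piR m n a - Real.sqrt K / Real.sqrt a)
      =O[nhdsWithin 0 (Set.Ioi 0)] fun a : ℝ => Real.sqrt a := by
    rw [isBigO_iff]
    refine ⟨C / Real.sqrt K, ?_⟩
    filter_upwards [hev1, hev2, hev3] with a h1 h2 h3
    have := key a h3 h1 h2
    rw [Real.norm_eq_abs, Real.norm_eq_abs, abs_of_nonneg (Real.sqrt_nonneg a)]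
    exact this
  refine ⟨part1, ?_⟩
  -- Part 2 : integrability
  obtain ⟨u, hu0, husub⟩ := mem_nhdsGT_iff_exists_Ioo_subset.1
    ((hev1.and (hev2.and hev3)).filter_mono le_rfl)
  set δ : ℝ := min u 1 with hδ_def
  have hδ0 : 0 < δ := lt_min (Set.mem_Ioi.1 hu0) one_pos
  have hδ1 : δ ≤ 1 := min_le_right _ _
  have hδprop : ∀ a ∈ Set.Ioo (0:ℝ) δ, |auxH m n a - K| ≤ C * a ∧ K/2 ≤ auxH m n a
      ∧ a ∈ Set.Ioo (0:ℝ) 1 := by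
    intro a ha
    have : a ∈ Set.Ioo (0:ℝ) u := ⟨ha.1, lt_of_lt_of_le ha.2 (min_le_left _ _)⟩
    exact husub this
  set g : ℝ → ℝ := fun a => Real.sqrt (auxH m n a / a) with hg_def
  have hgmeas : Measurable g := by
    apply Real.continuous_sqrt.measurable.comp
    apply Measurable.div _ measurable_id
    have hmeasU : ∀ l, Measurable (fun a => auxU m n a l) := fun l => by
      unfold auxU auxD
      exact (((measurable_const.mul (diff_prod1 1 l).continuous.measurable).mul
        (diff_prod2 ((m:ℝ)-1) 1 (n-l)).continuous.measurable)).div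
        (diff_prod2 (m:ℝ) 1 n).continuous.measurable
    unfold auxH auxG auxS auxQ auxT auxD
    apply Measurable.add
    · exact measurable_const.mul ((Finset.measurable_sum _ fun l _ => hmeasU l).sub
        ((Finset.measurable_sum _ fun j _ => ((diff_prod1 1 j).continuous.measurable.mul
          (diff_prod2 (m:ℝ) (j+1) n).continuous.measurable)).div
          (diff_prod2 (m:ℝ) 1 n).continuous.measurable))
    · apply measurable_id.mul
      apply Finset.measurable_sum
      intro j _
      apply Measurable.sub
      · exact (((measurable_const.mul measurable_id).mul
          (Finset.measurable_sum _ fun l _ => hmeasU l)).add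
            (measurable_const.mul (hmeasU n))).div (by fun_prop)
      · exact measurable_const.div (by fun_prop)
  have hpg : Set.EqOn g (piR m n) (Set.Ioo 0 1) := by
    intro a ha
    exact (piR_eq hm hn ha.1).symm
  -- integrable near 0
  have hint1 : IntegrableOn g (Set.Ioo 0 δ) := by
    have hrpow : IntegrableOn (fun a : ℝ => a ^ (-(1/2) : ℝ)) (Set.Ioo 0 δ) := by
      have h := intervalIntegral.intervalIntegrable_rpow' (a := 0) (b := δ)
        (r := -(1/2)) (by norm_num)
      rw [intervalIntegrable_iff_integrableOn_Ioc_of_le hδ0.le] at h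
      exact h.mono_set Set.Ioo_subset_Ioc_self
    apply Integrable.mono' (hrpow.const_mul (Real.sqrt (K + C)))
      (hgmeas.aestronglyMeasurable.restrict)
    rw [ae_restrict_iff' measurableSet_Ioo]
    filter_upwards with a ha
    obtain ⟨h1, h2, h3, _⟩ := hδprop a ha
    have ha0 : 0 < a := ha.1
    have haδ : a < δ := ha.2
    have hHle : auxH m n a ≤ K + C := by
      have : auxH m n a - K ≤ C * a := (abs_le.1 h1).2
      nlinarith [haδ.le.trans hδ1]
    have hKC : (0:ℝ) < K + C := by linarith
    rw [Real.norm_eq_abs, abs_of_nonneg (Real.sqrt_nonneg _)]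
    calc Real.sqrt (auxH m n a / a) ≤ Real.sqrt ((K + C) / a) := by
          apply Real.sqrt_le_sqrt
          exact div_le_div₀ hKC.le hHle ha0 le_rfl
    _ = Real.sqrt (K + C) * a ^ (-(1/2) : ℝ) := by
          rw [Real.sqrt_div hKC.le, Real.sqrt_eq_rpow a, div_eq_mul_inv, ← Real.rpow_neg ha0.le]
  have hint2 : IntegrableOn g (Set.Icc δ 1) := by
    apply ContinuousOn.integrableOn_Icc
    intro a ha
    have ha0 : 0 < a := lt_of_lt_of_le hδ0 ha.1
    have hca : ContinuousAt g a := by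
      apply (Real.continuous_sqrt.continuousAt).comp
      exact ((auxH_diff ha0.le).continuousAt.div continuousAt_id ha0.ne')
    exact hca.continuousWithinAt
  have hunion : IntegrableOn g (Set.Ioo 0 δ ∪ Set.Icc δ 1) := hint1.union hint2
  have hsub : Set.Ioo (0:ℝ) 1 ⊆ Set.Ioo 0 δ ∪ Set.Icc δ 1 := by
    intro x hx
    rcases lt_or_ge x δ with h | h
    · exact Or.inl ⟨hx.1, h⟩
    · exact Or.inr ⟨h, hx.2.le⟩
  have hgint : IntegrableOn g (Set.Ioo 0 1) := hunion.mono_set hsub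
  exact (integrableOn_congr_fun hpg measurableSet_Ioo).1 hgint
end

section
/- The function π^R(a) defined as the square root of ∑_{j=0}^{n-1}(Q(j|a,m,n)/(a+j)² − m/(ma+j)²), where Q is the Beta-Binomial upper tail as above, is O(a^{-3/2}) as a → ∞ and hence integrable at infinity; combined with integrability at 0, π^R is a proper (integrable) prior on (0,∞). -/
open Asymptotics Filter MeasureTheory

namespace Stmt12Aux

open Polynomial Finset

lemma Gamma_add_nat' {x : ℝ} (hx : 0 < x) (k : ℕ) :
    Real.Gamma (x + k) = (∏ i ∈ range k, (x + i)) * Real.Gamma x := by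
  induction k with
  | zero => simp
  | succ k ih =>
    have h1 : x + ((k : ℝ) + 1) = (x + k) + 1 := by ring
    have h2 : x + (k : ℝ) ≠ 0 := by positivity
    push_cast
    rw [h1, Real.Gamma_add_one h2, prod_range_succ, ih]
    ring

/-- numerator polynomial for `bbinom`. -/
noncomputable def PP (m n l : ℕ) : Polynomial ℝ :=
  C (n.choose l : ℝ) * (∏ i ∈ range l, (X + C (i : ℝ))) *
    (∏ i ∈ range (n - l), (C ((m : ℝ) - 1) * X + C (i : ℝ)))

/-- denominator polynomial for `bbinom`. -/
noncomputable def DD (m n : ℕ) : Polynomial ℝ :=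
  ∏ i ∈ range n, (C (m : ℝ) * X + C (i : ℝ))

lemma PP_eval (m n l : ℕ) (a : ℝ) :
    (PP m n l).eval a = (n.choose l : ℝ) * (∏ i ∈ range l, (a + i)) *
      (∏ i ∈ range (n - l), (((m : ℝ) - 1) * a + i)) := by
  simp [PP, eval_prod]

lemma DD_eval (m n : ℕ) (a : ℝ) :
    (DD m n).eval a = ∏ i ∈ range n, ((m : ℝ) * a + i) := by
  simp [DD, eval_prod]

lemma DD_eval_pos (m n : ℕ) (hm : 2 ≤ m) {a : ℝ} (ha : 0 < a) :
    0 < (DD m n).eval a := by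
  rw [DD_eval]
  exact prod_pos fun i _ => by positivity

lemma bbinom_eq (m n l : ℕ) (hm : 2 ≤ m) (hl : l ≤ n) {a : ℝ} (ha : 0 < a) :
    bbinom m n a l = (PP m n l).eval a / (DD m n).eval a := by
  have hm1 : (0:ℝ) < (m : ℝ) - 1 := by
    have : (2:ℝ) ≤ (m:ℝ) := by exact_mod_cast hm
    linarith
  have hmpos : (0:ℝ) < (m:ℝ) := by linarith
  have e1 : (l : ℝ) + a = a + l := by ring
  have e2 : (n : ℝ) - (l : ℝ) + ((m : ℝ) - 1) * a = ((m:ℝ)-1) * a + ((n - l : ℕ) : ℝ) := by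
    have : ((n - l : ℕ) : ℝ) = (n : ℝ) - l := by
      push_cast [Nat.cast_sub hl]; ring
    rw [this]; ring
  have e3 : (n : ℝ) + (m : ℝ) * a = (m:ℝ) * a + n := by ring
  have g1 := Gamma_add_nat' ha l
  have g2 := Gamma_add_nat' (x := ((m:ℝ)-1) * a) (by positivity) (n - l)
  have g3 := Gamma_add_nat' (x := (m:ℝ) * a) (by positivity) n
  have hGa := Real.Gamma_pos_of_pos ha
  have hGb := Real.Gamma_pos_of_pos (s := ((m:ℝ)-1) * a) (by positivity)
  have hGc := Real.Gamma_pos_of_pos (s := (m:ℝ) * a) (by positivity)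
  have hD : (0:ℝ) < ∏ i ∈ range n, ((m : ℝ) * a + i) := prod_pos fun i _ => by positivity
  rw [bbinom, e1, e2, e3, g1, g2, g3, PP_eval, DD_eval]
  field_simp

lemma lin_ne_zero {c : ℝ} (hc : c ≠ 0) (b : ℝ) : C c * X + C b ≠ 0 := by
  intro h
  have := natDegree_linear (a := c) (b := b) hc
  rw [h] at this
  simp at this

lemma DD_natDegree (m n : ℕ) (hm : 2 ≤ m) : (DD m n).natDegree = n := by
  have hm0 : (m : ℝ) ≠ 0 := by positivity
  rw [DD, natDegree_prod _ _ (fun i _ => lin_ne_zero hm0 _),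
    sum_congr rfl (fun i _ => natDegree_linear hm0)]
  simp

lemma DD_lead (m n : ℕ) (hm : 2 ≤ m) : (DD m n).leadingCoeff = (m : ℝ) ^ n := by
  have hm0 : (m : ℝ) ≠ 0 := by positivity
  rw [DD, leadingCoeff_prod, prod_congr rfl (fun i _ => leadingCoeff_linear hm0)]
  simp

lemma DD_ne_zero (m n : ℕ) (hm : 2 ≤ m) : DD m n ≠ 0 := by
  intro h
  have hm0 : (m : ℝ) ≠ 0 := by positivity
  have := DD_lead m n hm
  rw [h, leadingCoeff_zero] at this
  exact absurd this.symm (pow_ne_zero n hm0)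

lemma m1_ne_zero {m : ℕ} (hm : 2 ≤ m) : ((m : ℝ) - 1) ≠ 0 := by
  have : (2:ℝ) ≤ (m:ℝ) := by exact_mod_cast hm
  intro h; linarith [h]

lemma choose_cast_ne_zero {n l : ℕ} (hl : l ≤ n) : ((n.choose l : ℝ)) ≠ 0 := by
  have := Nat.choose_pos hl; positivity

lemma PP_natDegree (m n l : ℕ) (hm : 2 ≤ m) (hl : l ≤ n) : (PP m n l).natDegree = n := by
  have hm1 := m1_ne_zero hm
  have hc := choose_cast_ne_zero hl
  rw [PP, mul_assoc, natDegree_C_mul hc,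
    natDegree_mul (prod_ne_zero_iff.2 fun i _ => X_add_C_ne_zero _)
      (prod_ne_zero_iff.2 fun i _ => lin_ne_zero hm1 _),
    natDegree_prod _ _ (fun i _ => X_add_C_ne_zero _),
    natDegree_prod _ _ (fun i _ => lin_ne_zero hm1 _),
    sum_congr rfl (fun i _ => natDegree_X_add_C _),
    sum_congr rfl (fun i _ => natDegree_linear hm1)]
  simp
  omega

lemma PP_lead (m n l : ℕ) (hm : 2 ≤ m) (hl : l ≤ n) :
    (PP m n l).leadingCoeff = (n.choose l : ℝ) * ((m:ℝ) - 1) ^ (n - l) := by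
  have hm1 := m1_ne_zero hm
  rw [PP, leadingCoeff_mul, leadingCoeff_mul, leadingCoeff_prod, leadingCoeff_prod,
    leadingCoeff_C]
  simp only [leadingCoeff_X_add_C, leadingCoeff_linear hm1, prod_const, one_pow, one_mul,
    mul_one, card_range]

lemma PP_ne_zero (m n l : ℕ) (hm : 2 ≤ m) (hl : l ≤ n) : PP m n l ≠ 0 := by
  intro h
  have := PP_lead m n l hm hl
  rw [h, leadingCoeff_zero] at this
  exact absurd this.symm
    (mul_ne_zero (choose_cast_ne_zero hl) (pow_ne_zero _ (m1_ne_zero hm)))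

lemma rat_isBigO {p q : Polynomial ℝ} {k : ℕ} (hq : q ≠ 0)
    (h : (p * X ^ k).degree ≤ q.degree) :
    (fun a : ℝ => p.eval a / q.eval a) =O[atTop] fun a => ((a : ℝ) ^ k)⁻¹ := by
  have h1 : (fun x : ℝ => (p * X ^ k).eval x) =O[atTop] fun x => q.eval x :=
    Polynomial.isBigO_of_degree_le _ _ h
  have h2 : ∀ᶠ x : ℝ in atTop, q.eval x ≠ 0 := by
    filter_upwards [q.eventually_no_roots hq] with x hx
    exact hx
  have h3 : (fun x : ℝ => (p * X ^ k).eval x * (q.eval x)⁻¹) =O[atTop] (fun _ => (1:ℝ)) := by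
    refine (h1.mul (isBigO_refl (fun x : ℝ => (q.eval x)⁻¹) atTop)).trans ?_
    refine Filter.EventuallyEq.isBigO ?_
    filter_upwards [h2] with x hx
    field_simp
  have h4 := h3.mul (isBigO_refl (fun x : ℝ => ((x:ℝ) ^ k)⁻¹) atTop)
  refine h4.congr' ?_ ?_
  · filter_upwards [h2, eventually_gt_atTop (0:ℝ)] with x hx hx0
    have hxk : (x:ℝ) ^ k ≠ 0 := by positivity
    simp only [eval_mul, eval_pow, eval_X]
    field_simp
  · filter_upwards with x
    simp

/-- limiting binomial probability -/
noncomputable def Bi (m n l : ℕ) : ℝ := (n.choose l : ℝ) * ((m:ℝ)-1)^(n-l) / (m:ℝ)^n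

/-- limiting tail -/
noncomputable def Btail (m n j : ℕ) : ℝ := ∑ l ∈ Icc (j+1) n, Bi m n l

lemma mn_mul_Btail (m n j : ℕ) (hm : 2 ≤ m) :
    (m:ℝ)^n * Btail m n j = ∑ l ∈ Icc (j+1) n, (n.choose l : ℝ) * ((m:ℝ)-1)^(n-l) := by
  have hm0 : ((m:ℝ))^n ≠ 0 := by positivity
  rw [Btail, mul_sum]
  refine sum_congr rfl fun l hl => ?_
  rw [Bi]
  field_simp

/-- numerator of `Qtail - Btail`. -/
noncomputable def NN (m n j : ℕ) : Polynomial ℝ :=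
  C ((m:ℝ)^n) * (∑ l ∈ Icc (j+1) n, PP m n l) - C ((m:ℝ)^n * Btail m n j) * DD m n

lemma NN_degree (m n j : ℕ) (hm : 2 ≤ m) (hn : 1 ≤ n) :
    (NN m n j).degree ≤ ((n - 1 : ℕ) : WithBot ℕ) := by
  rw [degree_le_iff_coeff_zero]
  intro k hk
  have hk0 : (n - 1 : ℕ) < k := by exact_mod_cast hk
  have hk' : n ≤ k := by omega
  simp only [NN, coeff_sub, coeff_C_mul, finset_sum_coeff]
  rcases eq_or_lt_of_le hk' with heq | hlt
  · subst heq
    have h1 : ∀ l ∈ Icc (j+1) n, (PP m n l).coeff n = (n.choose l : ℝ) * ((m:ℝ)-1)^(n-l) := by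
      intro l hl
      have hl' : l ≤ n := (mem_Icc.1 hl).2
      have := PP_lead m n l hm hl'
      rw [leadingCoeff, PP_natDegree m n l hm hl'] at this
      exact this
    have h2 : (DD m n).coeff n = (m:ℝ)^n := by
      have := DD_lead m n hm
      rw [leadingCoeff, DD_natDegree m n hm] at this
      exact this
    rw [sum_congr rfl h1, h2, mn_mul_Btail m n j hm]
    ring
  · have h1 : ∀ l ∈ Icc (j+1) n, (PP m n l).coeff k = 0 := by
      intro l hl
      exact coeff_eq_zero_of_natDegree_lt (by rw [PP_natDegree m n l hm (mem_Icc.1 hl).2]; omega)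
    have h2 : (DD m n).coeff k = 0 :=
      coeff_eq_zero_of_natDegree_lt (by rw [DD_natDegree m n hm]; omega)
    rw [sum_congr rfl h1, h2]
    simp

lemma Qtail_eq (m n j : ℕ) (hm : 2 ≤ m) {a : ℝ} (ha : 0 < a) :
    Qtail m n a j = (∑ l ∈ Icc (j+1) n, (PP m n l).eval a) / (DD m n).eval a := by
  rw [Qtail, sum_div]
  exact sum_congr rfl fun l hl => bbinom_eq m n l hm (mem_Icc.1 hl).2 ha

lemma T1_isBigO (m n j : ℕ) (hm : 2 ≤ m) (hn : 1 ≤ n) :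
    (fun a : ℝ => (Qtail m n a j - Btail m n j) / (a + (j:ℝ))^2) =O[atTop]
      fun a => ((a:ℝ)^3)⁻¹ := by
  have hm0 : ((m:ℝ))^n ≠ 0 := by positivity
  set qq : Polynomial ℝ := C ((m:ℝ)^n) * (DD m n * (X + C (j:ℝ))^2) with hqq
  have hqne : qq ≠ 0 := by
    refine mul_ne_zero (by simpa using hm0) (mul_ne_zero (DD_ne_zero m n hm) ?_)
    exact pow_ne_zero _ (X_add_C_ne_zero _)
  have hqdeg : qq.degree = ((n + 2 : ℕ) : WithBot ℕ) := by
    rw [hqq, degree_mul, degree_mul, degree_C hm0, degree_pow, degree_X_add_C,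
      degree_eq_natDegree (DD_ne_zero m n hm), DD_natDegree m n hm]
    rw [zero_add]
    push_cast
    ring
  have hdeg : (NN m n j * X ^ 3).degree ≤ qq.degree := by
    rw [degree_mul, degree_X_pow, hqdeg]
    calc (NN m n j).degree + (3 : WithBot ℕ)
        ≤ ((n-1 : ℕ) : WithBot ℕ) + (3 : WithBot ℕ) :=
          add_le_add_left (NN_degree m n j hm hn) _
      _ = ((n + 2 : ℕ) : WithBot ℕ) := by
          rw [show (3 : WithBot ℕ) = ((3:ℕ) : WithBot ℕ) from rfl, ← Nat.cast_add]
          congr 1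
          omega
  refine (rat_isBigO hqne hdeg).congr' ?_ (by filter_upwards with x; rfl)
  filter_upwards [eventually_gt_atTop (0:ℝ)] with a ha
  have hD := DD_eval_pos m n hm ha
  have hDne : (DD m n).eval a ≠ 0 := ne_of_gt hD
  have haj : a + (j:ℝ) ≠ 0 := by positivity
  rw [Qtail_eq m n j hm ha]
  simp only [hqq, eval_mul, eval_sub, eval_C, eval_pow, eval_add, eval_X, NN,
    eval_finset_sum]
  field_simp

lemma u_isBigO (m : ℕ) (j : ℕ) (b : ℝ) (hm : 2 ≤ m) :
    (fun a : ℝ => b * ((a + (j:ℝ))^2)⁻¹ - (m:ℝ) * (((m:ℝ) * a + (j:ℝ))^2)⁻¹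
      + (1/(m:ℝ) - b) * ((a:ℝ)^2)⁻¹) =O[atTop] fun a => ((a:ℝ)^3)⁻¹ := by
  have hm0 : ((m:ℝ)) ≠ 0 := by positivity
  set jr : ℝ := (j : ℝ) with hjr
  set mr : ℝ := (m : ℝ) with hmr
  set pu : Polynomial ℝ :=
    C (2*jr - 2*b*mr^2*jr) * X^3 + C (jr^2*(b - mr + (1/mr - b)*(1+4*mr+mr^2))) * X^2
      + C ((1/mr - b)*2*jr^3*(1+mr)) * X + C ((1/mr - b)*jr^4) with hpu
  set qu : Polynomial ℝ := X^2 * ((X + C jr)^2 * (C mr * X + C jr)^2) with hqu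
  have hqne : qu ≠ 0 := by
    refine mul_ne_zero (pow_ne_zero _ X_ne_zero) (mul_ne_zero ?_ ?_)
    · exact pow_ne_zero _ (X_add_C_ne_zero _)
    · exact pow_ne_zero _ (lin_ne_zero hm0 _)
  have hqdeg : qu.degree = (6 : WithBot ℕ) := by
    rw [hqu, degree_mul, degree_mul, degree_pow, degree_pow, degree_pow, degree_X,
      degree_X_add_C, degree_linear hm0]
    rfl
  have hpdeg : pu.degree ≤ (3 : WithBot ℕ) := by
    rw [hpu]
    compute_degree
  have hdeg : (pu * X ^ 3).degree ≤ qu.degree := by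
    rw [degree_mul, degree_X_pow, hqdeg]
    calc pu.degree + (3 : WithBot ℕ) ≤ (3 : WithBot ℕ) + (3 : WithBot ℕ) :=
          add_le_add_left hpdeg _
      _ = (6 : WithBot ℕ) := rfl
  refine (rat_isBigO hqne hdeg).congr' ?_ (by filter_upwards with x; rfl)
  filter_upwards [eventually_gt_atTop (0:ℝ)] with a ha
  have h1 : a + jr ≠ 0 := by positivity
  have h2 : mr * a + jr ≠ 0 := by
    have : (0:ℝ) < mr := by positivity
    positivity
  have h3 : (a:ℝ) ≠ 0 := ne_of_gt ha
  simp only [hpu, hqu, eval_mul, eval_add, eval_pow, eval_C, eval_X]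
  field_simp
  ring


lemma key_binomial (m n : ℕ) (hn : 1 ≤ n) :
    ∑ l ∈ range (n+1), (l:ℝ) * ((n.choose l : ℝ) * ((m:ℝ)-1)^(n-l))
      = (n:ℝ) * (m:ℝ)^(n-1) := by
  rw [Finset.sum_range_succ']
  simp only [Nat.cast_zero, zero_mul, add_zero]
  have h2 : ∀ i ∈ range n, ((i+1:ℕ):ℝ) * ((n.choose (i+1) : ℝ) * ((m:ℝ)-1)^(n-(i+1)))
      = (n:ℝ) * (((n-1).choose i : ℝ) * ((m:ℝ)-1)^((n-1)-i)) := by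
    intro i hi
    have hcast : ((i+1) * n.choose (i+1) : ℕ) = (n * (n-1).choose i : ℕ) := by
      have h := Nat.add_one_mul_choose_eq (n-1) i
      have hn1 : n - 1 + 1 = n := by omega
      rw [hn1] at h
      rw [mul_comm (i+1) (n.choose (i+1)), ← h]
    have hexp : n - (i+1) = (n-1) - i := by omega
    have hc : ((i:ℝ)+1) * (n.choose (i+1) : ℝ) = (n:ℝ) * (((n-1).choose i : ℕ) : ℝ) := by
      exact_mod_cast congrArg (fun x : ℕ => (x : ℝ)) hcast
    rw [hexp]
    push_cast
    linear_combination hc * ((m:ℝ)-1)^((n-1)-i)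
  rw [sum_congr rfl h2, ← mul_sum]
  congr 1
  have hap := add_pow (1:ℝ) ((m:ℝ)-1) (n-1)
  have hr : (1:ℝ) + ((m:ℝ)-1) = (m:ℝ) := by ring
  rw [hr] at hap
  have hrange : n - 1 + 1 = n := by omega
  rw [hrange] at hap
  rw [hap]
  exact sum_congr rfl fun k hk => by ring

lemma sum_Btail (m n : ℕ) (hm : 2 ≤ m) (hn : 1 ≤ n) :
    ∑ j ∈ range n, Btail m n j = (n:ℝ) / (m:ℝ) := by
  have hB : ∀ j, Btail m n j = ∑ l ∈ range (n+1), if j+1 ≤ l then Bi m n l else 0 := by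
    intro j
    have hI : Finset.Icc (j+1) n = (range (n+1)).filter (fun l => j+1 ≤ l) := by
      ext x
      simp [Nat.lt_succ_iff]
      omega
    rw [Btail, hI, sum_filter]
  have hswap : ∑ j ∈ range n, Btail m n j
      = ∑ l ∈ range (n+1), ∑ j ∈ range n, (if j+1 ≤ l then Bi m n l else 0) := by
    rw [sum_congr rfl (fun j _ => hB j)]
    exact Finset.sum_comm
  rw [hswap]
  have hin : ∀ l ∈ range (n+1), ∑ j ∈ range n, (if j+1 ≤ l then Bi m n l else 0)
      = (l:ℝ) * Bi m n l := by
    intro l hl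
    have hl' : l ≤ n := Nat.lt_succ_iff.1 (mem_range.1 hl)
    rw [← sum_filter]
    have hf : (range n).filter (fun j => j+1 ≤ l) = range l := by
      ext x
      simp
      omega
    rw [hf, sum_const, card_range, nsmul_eq_mul]
  rw [sum_congr rfl hin]
  have hm0 : ((m:ℝ)) ≠ 0 := by positivity
  have hkey := key_binomial m n hn
  have : ∑ l ∈ range (n+1), (l:ℝ) * Bi m n l
      = (∑ l ∈ range (n+1), (l:ℝ) * ((n.choose l : ℝ) * ((m:ℝ)-1)^(n-l))) / (m:ℝ)^n := by
    rw [sum_div]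
    exact sum_congr rfl fun l _ => by rw [Bi]; field_simp
  rw [this, hkey]
  have hpow : (m:ℝ)^n = (m:ℝ)^(n-1) * (m:ℝ) := by
    rw [← pow_succ]
    congr 1
    omega
  rw [hpow]
  have hmp : ((m:ℝ))^(n-1) ≠ 0 := by positivity
  field_simp

lemma inner_isBigO (m n : ℕ) (hm : 2 ≤ m) (hn : 1 ≤ n) :
    (fun a : ℝ => ∑ j ∈ range n,
        (Qtail m n a j / (a + (j : ℝ)) ^ 2 - (m : ℝ) / ((m : ℝ) * a + (j : ℝ)) ^ 2))
      =O[atTop] fun a => ((a:ℝ)^3)⁻¹ := by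
  have hterm : ∀ j ∈ range n, (fun a : ℝ =>
      (Qtail m n a j - Btail m n j) / (a + (j:ℝ))^2
      + (Btail m n j * ((a + (j:ℝ))^2)⁻¹ - (m:ℝ) * (((m:ℝ) * a + (j:ℝ))^2)⁻¹
        + (1/(m:ℝ) - Btail m n j) * ((a:ℝ)^2)⁻¹)) =O[atTop] fun a => ((a:ℝ)^3)⁻¹ :=
    fun j _ => (T1_isBigO m n j hm hn).add (u_isBigO m j (Btail m n j) hm)
  have hsum := Asymptotics.IsBigO.sum hterm
  have hzero : ∑ j ∈ range n, (1/(m:ℝ) - Btail m n j) = 0 := by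
    rw [sum_sub_distrib, sum_Btail m n hm hn, sum_const, card_range, nsmul_eq_mul]
    have hm0 : ((m:ℝ)) ≠ 0 := by positivity
    field_simp
    ring
  refine hsum.congr' ?_ (by filter_upwards with x; rfl)
  filter_upwards with a
  have hexp : ∑ j ∈ range n, ((Qtail m n a j - Btail m n j) / (a + (j:ℝ))^2
      + (Btail m n j * ((a + (j:ℝ))^2)⁻¹ - (m:ℝ) * (((m:ℝ) * a + (j:ℝ))^2)⁻¹
        + (1/(m:ℝ) - Btail m n j) * ((a:ℝ)^2)⁻¹))
      = ∑ j ∈ range n, (Qtail m n a j / (a + (j:ℝ))^2 - (m:ℝ) / ((m:ℝ)*a + (j:ℝ))^2)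
        + (∑ j ∈ range n, (1/(m:ℝ) - Btail m n j)) * ((a:ℝ)^2)⁻¹ := by
    rw [sum_mul, ← sum_add_distrib]
    exact sum_congr rfl fun j _ => by ring
  simp only [Finset.sum_apply]
  rw [hexp, hzero, zero_mul, add_zero]


lemma sqrt_pow_key {a : ℝ} (ha : 0 < a) : Real.sqrt ((a^3)⁻¹) = a ^ (-(3/2) : ℝ) := by
  rw [show ((a^3)⁻¹ : ℝ) = a ^ ((-3 : ℝ)) by
        rw [Real.rpow_neg ha.le, ← Real.rpow_natCast a 3]; norm_num,
      Real.sqrt_eq_rpow, ← Real.rpow_mul ha.le]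
  norm_num

lemma piR_isBigO (m n : ℕ) (hm : 2 ≤ m) (hn : 1 ≤ n) :
    (piR m n) =O[atTop] fun a : ℝ => a ^ (-(3 / 2) : ℝ) := by
  obtain ⟨c, hc0, hc⟩ := (inner_isBigO m n hm hn).exists_nonneg
  rw [Asymptotics.isBigO_iff]
  refine ⟨Real.sqrt c, ?_⟩
  filter_upwards [hc.bound, eventually_gt_atTop (0:ℝ)] with a hfa ha
  have h1 : ‖piR m n a‖ = Real.sqrt (∑ j ∈ range n,
      (Qtail m n a j / (a + (j : ℝ)) ^ 2 - (m : ℝ) / ((m : ℝ) * a + (j : ℝ)) ^ 2)) := by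
    rw [Real.norm_eq_abs, piR, abs_of_nonneg (Real.sqrt_nonneg _)]
  rw [h1]
  have h2 : (∑ j ∈ range n,
      (Qtail m n a j / (a + (j : ℝ)) ^ 2 - (m : ℝ) / ((m : ℝ) * a + (j : ℝ)) ^ 2))
      ≤ c * ((a^3)⁻¹) := by
    calc (∑ j ∈ range n,
        (Qtail m n a j / (a + (j : ℝ)) ^ 2 - (m : ℝ) / ((m : ℝ) * a + (j : ℝ)) ^ 2))
        ≤ ‖(∑ j ∈ range n,
          (Qtail m n a j / (a + (j : ℝ)) ^ 2 - (m : ℝ) / ((m : ℝ) * a + (j : ℝ)) ^ 2))‖ :=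
          le_abs_self _
      _ ≤ c * ‖((a^3)⁻¹ : ℝ)‖ := hfa
      _ = c * ((a^3)⁻¹) := by
          rw [Real.norm_eq_abs, abs_of_nonneg (by positivity)]
  calc Real.sqrt (∑ j ∈ range n,
      (Qtail m n a j / (a + (j : ℝ)) ^ 2 - (m : ℝ) / ((m : ℝ) * a + (j : ℝ)) ^ 2))
      ≤ Real.sqrt (c * ((a^3)⁻¹)) := Real.sqrt_le_sqrt h2
    _ = Real.sqrt c * Real.sqrt ((a^3)⁻¹) := Real.sqrt_mul hc0 _
    _ = Real.sqrt c * (a ^ (-(3/2) : ℝ)) := by rw [sqrt_pow_key ha]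
    _ = Real.sqrt c * ‖a ^ (-(3/2) : ℝ)‖ := by
          rw [Real.norm_eq_abs, abs_of_nonneg (Real.rpow_nonneg ha.le _)]


/-- rational form of the inner sum, continuous on `(0,∞)`. -/
noncomputable def FF (m n : ℕ) : ℝ → ℝ := fun a =>
  ∑ j ∈ range n, ((∑ l ∈ Icc (j+1) n, (PP m n l).eval a) / (DD m n).eval a / (a + (j:ℝ))^2
    - (m:ℝ) / ((m:ℝ)*a + (j:ℝ))^2)

lemma FF_eq (m n : ℕ) (hm : 2 ≤ m) {a : ℝ} (ha : 0 < a) :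
    (∑ j ∈ range n,
      (Qtail m n a j / (a + (j : ℝ)) ^ 2 - (m : ℝ) / ((m : ℝ) * a + (j : ℝ)) ^ 2)) = FF m n a := by
  rw [FF]
  exact sum_congr rfl fun j _ => by rw [Qtail_eq m n j hm ha]

lemma FF_contOn (m n : ℕ) (hm : 2 ≤ m) : ContinuousOn (FF m n) (Set.Ioi 0) := by
  have hmp : (0:ℝ) < (m:ℝ) := by
    have : (2:ℝ) ≤ (m:ℝ) := by exact_mod_cast hm
    linarith
  refine continuousOn_finset_sum _ fun j _ => ContinuousOn.sub ?_ ?_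
  · refine ContinuousOn.div (ContinuousOn.div ?_ ?_ ?_) ?_ ?_
    · exact (continuous_finset_sum _ fun l _ => (PP m n l).continuous).continuousOn
    · exact (DD m n).continuous.continuousOn
    · intro a ha
      exact ne_of_gt (DD_eval_pos m n hm ha)
    · exact ((continuous_id.add continuous_const).pow 2).continuousOn
    · intro a ha
      have ha' : (0:ℝ) < a := ha
      show (a + (j:ℝ))^2 ≠ 0
      positivity
  · refine ContinuousOn.div continuous_const.continuousOn
      (((continuous_const.mul continuous_id).add continuous_const).pow 2).continuousOn ?_
    intro a ha
    have ha' : (0:ℝ) < a := ha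
    show ((m:ℝ) * a + (j:ℝ))^2 ≠ 0
    positivity

lemma piR_contOn (m n : ℕ) (hm : 2 ≤ m) : ContinuousOn (piR m n) (Set.Ioi 0) := by
  refine ContinuousOn.congr
    (Real.continuous_sqrt.comp_continuousOn (FF_contOn m n hm)) ?_
  intro a ha
  have ha' : (0:ℝ) < a := ha
  rw [piR, Function.comp_apply, FF_eq m n hm ha']


/-- reduced numerator (for `l ≥ 1`): `PP = X * PPr`. -/
noncomputable def PPr (m n l : ℕ) : Polynomial ℝ :=
  C (n.choose l : ℝ) * (∏ i ∈ range (l-1), (X + C ((i:ℝ)+1))) *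
    (∏ i ∈ range (n - l), (C ((m : ℝ) - 1) * X + C (i : ℝ)))

/-- reduced denominator: `DD = (C m * X) * DDr`. -/
noncomputable def DDr (m n : ℕ) : Polynomial ℝ :=
  ∏ i ∈ range (n-1), (C (m : ℝ) * X + C ((i:ℝ)+1))

lemma PP_factor (m n l : ℕ) (hl : 1 ≤ l) : PP m n l = X * PPr m n l := by
  obtain ⟨k, rfl⟩ : ∃ k, l = k + 1 := ⟨l - 1, by omega⟩
  rw [PP, PPr]
  rw [Finset.prod_range_succ' (fun i => X + C ((i:ℝ))) k]
  have h1 : ∀ i : ℕ, X + C (((i+1:ℕ)):ℝ) = X + C ((i:ℝ)+1) := by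
    intro i; push_cast; ring
  rw [Finset.prod_congr rfl (fun i _ => h1 i)]
  simp only [Nat.cast_zero, map_zero, add_zero, Nat.add_sub_cancel]
  ring

lemma DD_factor (m n : ℕ) (hn : 1 ≤ n) : DD m n = (C (m:ℝ) * X) * DDr m n := by
  obtain ⟨k, hk⟩ : ∃ k, n = k + 1 := ⟨n - 1, by omega⟩
  subst hk
  rw [DD, DDr]
  rw [Finset.prod_range_succ' (fun i => C (m:ℝ) * X + C ((i:ℝ))) k]
  have h1 : ∀ i : ℕ, C (m:ℝ) * X + C (((i+1:ℕ)):ℝ) = C (m:ℝ) * X + C ((i:ℝ)+1) := by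
    intro i; push_cast; ring
  rw [Finset.prod_congr rfl (fun i _ => h1 i)]
  simp only [Nat.cast_zero, map_zero, add_zero, Nat.add_sub_cancel]
  ring

lemma DDr_eval_pos (m n : ℕ) (hm : 2 ≤ m) {a : ℝ} (ha : 0 ≤ a) :
    0 < (DDr m n).eval a := by
  rw [DDr]
  rw [Polynomial.eval_prod]
  refine prod_pos fun i _ => ?_
  simp only [Polynomial.eval_add, Polynomial.eval_mul, Polynomial.eval_C, Polynomial.eval_X,
    Polynomial.eval_one]
  have hmp : (0:ℝ) ≤ (m:ℝ) := by positivity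
  positivity

lemma Qtail_eq' (m n j : ℕ) (hm : 2 ≤ m) (hn : 1 ≤ n) {a : ℝ} (ha : 0 < a) :
    Qtail m n a j = (∑ l ∈ Icc (j+1) n, (PPr m n l).eval a) / ((m:ℝ) * (DDr m n).eval a) := by
  have hmp : (0:ℝ) < (m:ℝ) := by
    have : (2:ℝ) ≤ (m:ℝ) := by exact_mod_cast hm
    linarith
  have hDr := DDr_eval_pos m n hm ha.le
  rw [Qtail_eq m n j hm ha, DD_factor m n hn]
  have h1 : ∀ l ∈ Icc (j+1) n, (PP m n l).eval a = a * (PPr m n l).eval a := by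
    intro l hl
    have h1l : 1 ≤ l := by
      have := (mem_Icc.1 hl).1
      omega
    rw [PP_factor m n l h1l]
    simp [Polynomial.eval_mul]
  rw [sum_congr rfl h1, ← Finset.mul_sum]
  simp only [Polynomial.eval_mul, Polynomial.eval_C, Polynomial.eval_X]
  have hDne : (DDr m n).eval a ≠ 0 := ne_of_gt hDr
  have hane : a ≠ 0 := ne_of_gt ha
  have hmne : (m:ℝ) ≠ 0 := ne_of_gt hmp
  field_simp

/-- numerator of `Q(0|a) - 1/m`, divisible by `X`. -/
noncomputable def WW (m n : ℕ) : Polynomial ℝ := (∑ l ∈ Icc 1 n, PPr m n l) - DDr m n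

lemma WW_coeff_zero (m n : ℕ) (hm : 2 ≤ m) (hn : 1 ≤ n) : (WW m n).coeff 0 = 0 := by
  rw [Polynomial.coeff_zero_eq_eval_zero, WW, Polynomial.eval_sub, Polynomial.eval_finset_sum]
  have h1 : ∑ l ∈ Icc 1 n, (PPr m n l).eval 0 = (PPr m n n).eval 0 := by
    refine sum_eq_single_of_mem n (by simp [hn]) (fun l hl hln => ?_)
    have hl' : l < n := lt_of_le_of_ne (mem_Icc.1 hl).2 hln
    rw [PPr]
    simp only [Polynomial.eval_mul, Polynomial.eval_prod]
    have h0 : (0:ℕ) ∈ range (n - l) := mem_range.2 (by omega)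
    have : ∏ i ∈ range (n - l), ((C ((m : ℝ) - 1) * X + C (i : ℝ)).eval 0) = 0 :=
      prod_eq_zero h0 (by simp)
    rw [this]
    ring
  rw [h1, PPr, DDr]
  simp only [Polynomial.eval_mul, Polynomial.eval_prod, Polynomial.eval_add, Polynomial.eval_C,
    Polynomial.eval_X, Nat.choose_self, Nat.cast_one, Nat.sub_self, range_zero, prod_empty]
  simp

lemma WW_factor (m n : ℕ) (hm : 2 ≤ m) (hn : 1 ≤ n) :
    WW m n = Polynomial.X * (WW m n).divX := by
  have := Polynomial.X_mul_divX_add (WW m n)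
  rw [WW_coeff_zero m n hm hn] at this
  simpa using this.symm

/-- the function `a * (inner sum)`, continuous on `[0,1]`. -/
noncomputable def phi (m n : ℕ) : ℝ → ℝ := fun a =>
  ((WW m n).divX).eval a / ((m:ℝ) * (DDr m n).eval a)
  + ∑ j ∈ Icc 1 (n-1),
      (a * ((∑ l ∈ Icc (j+1) n, (PPr m n l).eval a) / ((m:ℝ) * (DDr m n).eval a)) / (a + (j:ℝ))^2
       - a * (m:ℝ) / ((m:ℝ)*a + (j:ℝ))^2)

lemma phi_contOn (m n : ℕ) (hm : 2 ≤ m) : ContinuousOn (phi m n) (Set.Icc 0 1) := by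
  have hmp : (0:ℝ) < (m:ℝ) := by
    have : (2:ℝ) ≤ (m:ℝ) := by exact_mod_cast hm
    linarith
  refine ContinuousOn.add ?_ ?_
  · refine ContinuousOn.div ((WW m n).divX.continuous).continuousOn
      (continuous_const.mul (DDr m n).continuous).continuousOn ?_
    intro a ha
    have ha0 : (0:ℝ) ≤ a := ha.1
    have := DDr_eval_pos m n hm ha0
    show (m:ℝ) * (DDr m n).eval a ≠ 0
    positivity
  · refine continuousOn_finset_sum _ fun j hj => ContinuousOn.sub ?_ ?_
    · have hj1 : 1 ≤ j := (mem_Icc.1 hj).1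
      refine ContinuousOn.div (ContinuousOn.mul continuous_id.continuousOn
        (ContinuousOn.div (continuous_finset_sum _ fun l _ => (PPr m n l).continuous).continuousOn
          (continuous_const.mul (DDr m n).continuous).continuousOn ?_))
        ((continuous_id.add continuous_const).pow 2).continuousOn ?_
      · intro a ha
        have := DDr_eval_pos m n hm ha.1
        show (m:ℝ) * (DDr m n).eval a ≠ 0
        positivity
      · intro a ha
        have ha0 : (0:ℝ) ≤ a := ha.1
        have hjr : (1:ℝ) ≤ (j:ℝ) := by exact_mod_cast hj1
        show (a + (j:ℝ))^2 ≠ 0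
        positivity
    · have hj1 : 1 ≤ j := (mem_Icc.1 hj).1
      refine ContinuousOn.div (continuous_id.mul continuous_const).continuousOn
        (((continuous_const.mul continuous_id).add continuous_const).pow 2).continuousOn ?_
      intro a ha
      have ha0 : (0:ℝ) ≤ a := ha.1
      have hjr : (1:ℝ) ≤ (j:ℝ) := by exact_mod_cast hj1
      show ((m:ℝ) * a + (j:ℝ))^2 ≠ 0
      positivity


lemma f_eq_phi (m n : ℕ) (hm : 2 ≤ m) (hn : 1 ≤ n) {a : ℝ} (ha : 0 < a) :
    (∑ j ∈ range n,
      (Qtail m n a j / (a + (j : ℝ)) ^ 2 - (m : ℝ) / ((m : ℝ) * a + (j : ℝ)) ^ 2))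
      = phi m n a / a := by
  have hmp : (0:ℝ) < (m:ℝ) := by
    have : (2:ℝ) ≤ (m:ℝ) := by exact_mod_cast hm
    linarith
  have hmne : (m:ℝ) ≠ 0 := ne_of_gt hmp
  have hane : a ≠ 0 := ne_of_gt ha
  have hDr := DDr_eval_pos m n hm ha.le
  have hDne : (DDr m n).eval a ≠ 0 := ne_of_gt hDr
  have hsplit : range n = insert 0 (Icc 1 (n-1)) := by
    ext x
    simp [mem_range, mem_insert, mem_Icc]
    omega
  rw [hsplit, sum_insert (by simp)]
  have hWW : (WW m n).eval a = a * ((WW m n).divX).eval a := by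
    conv_lhs => rw [WW_factor m n hm hn]
    simp
  have hSD : (∑ l ∈ Icc 1 n, (PPr m n l).eval a) - (DDr m n).eval a
      = a * ((WW m n).divX).eval a := by
    rw [← hWW, WW, Polynomial.eval_sub, Polynomial.eval_finset_sum]
  have hS : (∑ l ∈ Icc 1 n, (PPr m n l).eval a)
      = a * ((WW m n).divX).eval a + (DDr m n).eval a := by linarith [hSD]
  have h0 : Qtail m n a 0 / (a + ((0:ℕ) : ℝ)) ^ 2 - (m : ℝ) / ((m : ℝ) * a + ((0:ℕ) : ℝ)) ^ 2
      = ((WW m n).divX).eval a / ((m:ℝ) * (DDr m n).eval a) / a := by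
    rw [Qtail_eq' m n 0 hm hn ha]
    simp only [Nat.cast_zero, add_zero, zero_add]
    rw [hS]
    field_simp
    ring
  have hj : ∀ j ∈ Icc 1 (n-1),
      Qtail m n a j / (a + (j : ℝ)) ^ 2 - (m : ℝ) / ((m : ℝ) * a + (j : ℝ)) ^ 2
      = (a * ((∑ l ∈ Icc (j+1) n, (PPr m n l).eval a) / ((m:ℝ) * (DDr m n).eval a))
          / (a + (j:ℝ))^2 - a * (m:ℝ) / ((m:ℝ)*a + (j:ℝ))^2) / a := by
    intro j hj
    have hj1 : 1 ≤ j := (mem_Icc.1 hj).1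
    have hjr : (1:ℝ) ≤ (j:ℝ) := by exact_mod_cast hj1
    have h1 : a + (j:ℝ) ≠ 0 := by positivity
    have h2 : (m:ℝ) * a + (j:ℝ) ≠ 0 := by positivity
    rw [Qtail_eq' m n j hm hn ha]
    field_simp
  rw [h0, sum_congr rfl hj, ← sum_div, ← add_div]
  rfl

lemma sqrt_inv_key {a : ℝ} (ha : 0 < a) : Real.sqrt (a⁻¹) = a ^ (-(1/2) : ℝ) := by
  rw [show (a⁻¹ : ℝ) = a ^ ((-1 : ℝ)) by rw [Real.rpow_neg ha.le, Real.rpow_one],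
      Real.sqrt_eq_rpow, ← Real.rpow_mul ha.le]
  norm_num

end Stmt12Aux

/-- `π^R(a) = O(a^{-3/2})` as `a → ∞`, and `π^R` is a proper (integrable) prior
on `(0,∞)`. -/
theorem stmt12 (m n : ℕ) (hm : 2 ≤ m) (hn : 2 ≤ n) :
    ((piR m n) =O[atTop] fun a : ℝ => a ^ (-(3 / 2) : ℝ))
    ∧ IntegrableOn (piR m n) (Set.Ioi 0) := by
  have hn1 : 1 ≤ n := by omega
  refine ⟨Stmt12Aux.piR_isBigO m n hm hn1, ?_⟩
  obtain ⟨c, hc0, hc⟩ := (Stmt12Aux.piR_isBigO m n hm hn1).exists_nonneg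
  obtain ⟨T0, hT0⟩ := eventually_atTop.1 hc.bound
  set T : ℝ := max T0 1 with hTdef
  have hT1 : (1:ℝ) ≤ T := le_max_right _ _
  have hTpos : (0:ℝ) < T := lt_of_lt_of_le one_pos hT1
  have hcont := Stmt12Aux.piR_contOn m n hm
  -- piece 2 : [1, T]
  have hp2 : IntegrableOn (piR m n) (Set.Icc 1 T) :=
    ContinuousOn.integrableOn_compact isCompact_Icc
      (hcont.mono (fun x hx => lt_of_lt_of_le one_pos hx.1))
  -- piece 3 : (T, ∞)
  have hp3 : IntegrableOn (piR m n) (Set.Ioi T) := by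
    refine Integrable.mono' (g := fun a : ℝ => c * a ^ (-(3/2) : ℝ))
      ((integrableOn_Ioi_rpow_of_lt (by norm_num) hTpos).const_mul c)
      ((hcont.mono (fun x hx => lt_trans hTpos hx)).aestronglyMeasurable
        measurableSet_Ioi) ?_
    rw [ae_restrict_iff' measurableSet_Ioi]
    refine Eventually.of_forall fun a ha => ?_
    have haT : T < a := ha
    have ha0 : (0:ℝ) < a := lt_trans hTpos haT
    have hb := hT0 a (le_trans (le_max_left T0 1) haT.le)
    calc ‖piR m n a‖ ≤ c * ‖a ^ (-(3/2) : ℝ)‖ := hb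
      _ = c * a ^ (-(3/2) : ℝ) := by
          rw [Real.norm_eq_abs, abs_of_nonneg (Real.rpow_nonneg ha0.le _)]
  -- piece 1 : (0, 1]
  obtain ⟨C, hC⟩ := (isCompact_Icc (a := (0:ℝ)) (b := 1)).exists_bound_of_continuousOn
    (Stmt12Aux.phi_contOn m n hm)
  have hC0 : 0 ≤ C := le_trans (norm_nonneg _) (hC 0 ⟨le_refl _, zero_le_one⟩)
  have hbound : ∀ a ∈ Set.Ioc (0:ℝ) 1, ‖piR m n a‖ ≤ Real.sqrt C * a ^ (-(1/2) : ℝ) := by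
    intro a ha
    have ha0 : 0 < a := ha.1
    have hfa := Stmt12Aux.f_eq_phi m n hm hn1 ha0
    have hpiR : piR m n a = Real.sqrt (Stmt12Aux.phi m n a / a) := by rw [piR, hfa]
    rw [Real.norm_eq_abs, hpiR, abs_of_nonneg (Real.sqrt_nonneg _)]
    have hphiC : Stmt12Aux.phi m n a ≤ C := by
      have := hC a ⟨ha0.le, ha.2⟩
      rw [Real.norm_eq_abs] at this
      exact le_trans (le_abs_self _) this
    calc Real.sqrt (Stmt12Aux.phi m n a / a) ≤ Real.sqrt (C / a) := by
          refine Real.sqrt_le_sqrt ?_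
          gcongr
      _ = Real.sqrt C * Real.sqrt a⁻¹ := by rw [div_eq_mul_inv, Real.sqrt_mul hC0]
      _ = Real.sqrt C * a ^ (-(1/2) : ℝ) := by rw [Stmt12Aux.sqrt_inv_key ha0]
  have hp1 : IntegrableOn (piR m n) (Set.Ioc 0 1) := by
    refine Integrable.mono' (g := fun a : ℝ => Real.sqrt C * a ^ (-(1/2) : ℝ)) ?_
      ((hcont.mono (fun x hx => hx.1)).aestronglyMeasurable measurableSet_Ioc) ?_
    · have h1 : IntervalIntegrable (fun x : ℝ => x ^ (-(1/2) : ℝ)) volume 0 1 :=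
        intervalIntegral.intervalIntegrable_rpow' (by norm_num)
      rw [intervalIntegrable_iff, Set.uIoc_of_le zero_le_one] at h1
      exact h1.const_mul _
    · rw [ae_restrict_iff' measurableSet_Ioc]
      exact Eventually.of_forall hbound
  refine (hp1.union (hp2.union hp3)).mono_set ?_
  intro x hx
  have hx0 : (0:ℝ) < x := hx
  rcases le_or_gt x 1 with h1 | h1
  · exact Set.mem_union_left _ ⟨hx0, h1⟩
  · rcases le_or_gt x T with h2 | h2
    · exact Set.mem_union_right _ (Set.mem_union_left _ ⟨h1.le, h2⟩)
    · exact Set.mem_union_right _ (Set.mem_union_right _ h2)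
end
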